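/- Under the von Mises conditions (ψ' > 0, a = 1/ψ' with a' → 0, a regularly varying, a(R) = o(R)), for each fixed z ≥ 0, ψ(R + a(R)z) − ψ(R) → C'·z as R → ∞ for some constant C' > 0, and consequently ∫_0^∞ (1 + a(R)z/R)^{d−1}·exp(−(ψ(R+a(R)z)−ψ(R))) dz converges to ∫_0^∞ e^{−C'z} dz < ∞ as R → ∞. -/

import Mathlib

set_option maxHeartbeats 1000000

open Filter Topology MeasureTheory Set


lemma von_mises_core
    (ψ ψ' a : ℝ → ℝ) (z₀ : ℝ)
    (hderiv : ∀ t ∈ Set.Ici z₀, HasDerivAt ψ (ψ' t) t)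
    (hψ'pos : ∀ t ∈ Set.Ici z₀, 0 < ψ' t)
    (ha : ∀ t, a t = 1 / ψ' t)
    (hdiffa : ∀ t, z₀ < t → HasDerivAt a (deriv a t) t)
    {R z ε : ℝ} (hR : z₀ < R) (hz : 0 < z) (hε : 0 < ε)
    (hεR : ∀ t, R ≤ t → |deriv a t| ≤ ε) :
    z / (1 + ε * z) ≤ ψ (R + a R * z) - ψ R ∧
    (ε * z < 1 → ψ (R + a R * z) - ψ R ≤ z / (1 - ε * z)) ∧
    ε⁻¹ * Real.log (1 + ε * z) ≤ ψ (R + a R * z) - ψ R := by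
  have apos : ∀ t, z₀ ≤ t → 0 < a t := fun t ht => by
    rw [ha t]; exact one_div_pos.mpr (hψ'pos t ht)
  have ainv : ∀ t, z₀ ≤ t → ψ' t = (a t)⁻¹ := fun t ht => by
    rw [ha t, one_div, inv_inv]
  have haR : 0 < a R := apos R hR.le
  set h : ℝ := a R * z with hh
  have hhpos : 0 < h := mul_pos haR hz
  -- bound on a on the interval
  have abound : ∀ t ∈ Icc R (R + h), |a t - a R| ≤ ε * (t - R) := by
    intro t ht
    have key : ‖a t - a R‖ ≤ ε * ‖t - R‖ := by
      exact (convex_Icc _ _).norm_image_sub_le_of_norm_hasDerivWithin_le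
        (f' := fun x => deriv a x)
        (fun x hx => (hdiffa x (lt_of_lt_of_le hR hx.1)).hasDerivWithinAt)
        (fun x hx => hεR x hx.1) (left_mem_Icc.mpr (by linarith)) ht
    have htR : (0:ℝ) ≤ t - R := by linarith [ht.1]
    simpa [Real.norm_eq_abs, abs_of_nonneg htR] using key
  have aup : ∀ t ∈ Icc R (R + h), a t ≤ a R + ε * (t - R) := by
    intro t ht
    have := abs_le.mp (abound t ht)
    linarith [this.2]
  have aup' : ∀ t ∈ Icc R (R + h), a t ≤ a R * (1 + ε * z) := by
    intro t ht
    have h1 := aup t ht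
    have h2 : t - R ≤ h := by linarith [ht.2]
    have : ε * (t - R) ≤ ε * h := by nlinarith
    nlinarith
  have alow : ∀ t ∈ Icc R (R + h), a R * (1 - ε * z) ≤ a t := by
    intro t ht
    have := abs_le.mp (abound t ht)
    have h2 : t - R ≤ h := by linarith [ht.2]
    nlinarith [this.1]
  -- MVT for ψ
  have hcont : ContinuousOn ψ (Icc R (R + h)) := fun x hx =>
    (hderiv x (le_trans hR.le hx.1)).continuousAt.continuousWithinAt
  obtain ⟨c, hc, hslope⟩ := exists_hasDerivAt_eq_slope ψ ψ' (by linarith : R < R + h)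
    hcont (fun x hx => hderiv x (by exact le_trans hR.le hx.1.le))
  have hcIcc : c ∈ Icc R (R + h) := ⟨hc.1.le, hc.2.le⟩
  have hacpos : 0 < a c := apos c (le_trans hR.le hc.1.le)
  have hD : ψ (R + h) - ψ R = h / a c := by
    have : ψ' c = (ψ (R + h) - ψ R) / (R + h - R) := hslope
    rw [ainv c (le_trans hR.le hc.1.le)] at this
    field_simp at this ⊢
    rw [add_sub_cancel_left, eq_div_iff hhpos.ne', one_mul] at this; linarith [this]
  constructor
  · -- lower bound z/(1+εz)
    rw [hD]
    have h1 : a c ≤ a R * (1 + ε * z) := aup' c hcIcc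
    have h2 : 0 < a R * (1 + ε * z) := by nlinarith
    calc z / (1 + ε * z) = h / (a R * (1 + ε * z)) := by
          rw [hh, mul_div_mul_left _ _ (ne_of_gt haR)]
      _ ≤ h / a c := by apply div_le_div_of_nonneg_left hhpos.le hacpos h1
  constructor
  · -- upper bound
    intro hεz
    rw [hD]
    have h1 : a R * (1 - ε * z) ≤ a c := alow c hcIcc
    have h2 : 0 < a R * (1 - ε * z) := by nlinarith
    calc h / a c ≤ h / (a R * (1 - ε * z)) := by
          apply div_le_div_of_nonneg_left hhpos.le h2 h1
      _ = z / (1 - ε * z) := by rw [hh, mul_div_mul_left _ _ (ne_of_gt haR)]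
  · -- log lower bound
    set φ : ℝ → ℝ := fun t => ψ t - ε⁻¹ * Real.log (a R + ε * (t - R)) with hφ
    have hargpos : ∀ t ∈ Icc R (R + h), 0 < a R + ε * (t - R) := by
      intro t ht; nlinarith [ht.1]
    have hφd : ∀ t ∈ Icc R (R + h),
        HasDerivAt φ (ψ' t - (a R + ε * (t - R))⁻¹) t := by
      intro t ht
      have hlin : HasDerivAt (fun s => a R + ε * (s - R)) ε t := by
        simpa using (((hasDerivAt_id t).sub_const R).const_mul ε).const_add (a R)
      have hlog : HasDerivAt (fun s => Real.log (a R + ε * (s - R)))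
          (ε / (a R + ε * (t - R))) t := hlin.log (ne_of_gt (hargpos t ht))
      have := (hderiv t (le_trans hR.le ht.1)).sub (hlog.const_mul ε⁻¹)
      convert this using 1
      all_goals first | rfl | rw [← mul_div_assoc, inv_mul_cancel₀ hε.ne', one_div]
    obtain ⟨c₂, hc₂, hs₂⟩ := exists_hasDerivAt_eq_slope φ
      (fun t => ψ' t - (a R + ε * (t - R))⁻¹) (by linarith : R < R + h)
      (fun x hx => (hφd x hx).continuousAt.continuousWithinAt)
      (fun x hx => hφd x ⟨hx.1.le, hx.2.le⟩)
    have hc₂Icc : c₂ ∈ Icc R (R + h) := ⟨hc₂.1.le, hc₂.2.le⟩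
    have hφ'nonneg : 0 ≤ ψ' c₂ - (a R + ε * (c₂ - R))⁻¹ := by
      rw [ainv c₂ (le_trans hR.le hc₂.1.le)]
      have h1 : a c₂ ≤ a R + ε * (c₂ - R) := aup c₂ hc₂Icc
      have h2 : 0 < a c₂ := apos c₂ (le_trans hR.le hc₂.1.le)
      have := inv_anti₀ h2 h1
      linarith
    have hmono : φ R ≤ φ (R + h) := by
      have := hs₂ ▸ hφ'nonneg
      have h3 : 0 ≤ (φ (R + h) - φ R) / (R + h - R) := this
      have h4 : 0 ≤ φ (R + h) - φ R := by
        by_contra hcon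
        push_neg at hcon
        have : (φ (R + h) - φ R) / (R + h - R) < 0 :=
          div_neg_of_neg_of_pos (by linarith) (by linarith)
        linarith
      linarith
    have hlogeq : Real.log (a R + ε * (R + h - R)) - Real.log (a R + ε * (R - R)) =
        Real.log (1 + ε * z) := by
      have : a R + ε * (R + h - R) = a R * (1 + ε * z) := by rw [hh]; ring
      rw [this]
      have : a R + ε * (R - R) = a R := by ring
      rw [this, Real.log_mul (ne_of_gt haR) (by nlinarith)]
      ring
    simp only [hφ] at hmono
    have : ε⁻¹ * Real.log (1 + ε * z) = ε⁻¹ * (Real.log (a R + ε * (R + h - R))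
        - Real.log (a R + ε * (R - R))) := by rw [hlogeq]
    rw [this]
    nlinarith [hmono]

theorem von_mises_tail_integral_convergence
    (d : ℕ) (hd : 1 ≤ d)
    (ψ ψ' a : ℝ → ℝ) (z₀ : ℝ)
    (hC2 : ContDiffOn ℝ 2 ψ (Set.Ici z₀))
    (hderiv : ∀ z ∈ Set.Ici z₀, HasDerivAt ψ (ψ' z) z)
    (hψ'pos : ∀ z ∈ Set.Ici z₀, 0 < ψ' z)
    (hψtop : Tendsto ψ atTop atTop)
    (ha : ∀ z, a z = 1 / ψ' z)
    (ha' : Tendsto (deriv a) atTop (𝓝 0))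
    (haRV : ∃ ρ : ℝ, ∀ t > (0 : ℝ), Tendsto (fun z => a (t * z) / a z) atTop (𝓝 (t ^ ρ)))
    (haLittle : (fun z => a z) =o[atTop] (fun z : ℝ => z)) :
    ∃ C' : ℝ, 0 < C' ∧
      (∀ z : ℝ, 0 ≤ z →
        Tendsto (fun R => ψ (R + a R * z) - ψ R) atTop (𝓝 (C' * z))) ∧
      Integrable (fun z => Real.exp (-C' * z)) (Measure.restrict volume (Set.Ioi 0)) ∧
      Tendsto (fun R => ∫ z in Set.Ioi (0 : ℝ),
          (1 + a R * z / R) ^ (d - 1) * Real.exp (-(ψ (R + a R * z) - ψ R)))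
        atTop (𝓝 (∫ z in Set.Ioi (0 : ℝ), Real.exp (-C' * z))) := by
  -- differentiability of `a` above `z₀`
  have hdψ : ∀ t ∈ Set.Ioi z₀, deriv ψ t = ψ' t := fun t ht =>
    (hderiv t (Set.mem_Ici.mpr (le_of_lt ht))).deriv
  have hC2' : ContDiffOn ℝ 1 (deriv ψ) (Set.Ioi z₀) :=
    (hC2.mono Ioi_subset_Ici_self).deriv_of_isOpen isOpen_Ioi (by norm_num)
  have hdiffψ' : ∀ t ∈ Set.Ioi z₀, DifferentiableAt ℝ (deriv ψ) t := fun t ht =>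
    ((hC2'.differentiableOn one_ne_zero) t ht).differentiableAt (isOpen_Ioi.mem_nhds ht)
  have hdiffa : ∀ t, z₀ < t → HasDerivAt a (deriv a t) t := by
    intro t ht
    have heq : a =ᶠ[𝓝 t] fun s => (deriv ψ s)⁻¹ := by
      filter_upwards [isOpen_Ioi.mem_nhds ht] with s hs
      rw [ha s, one_div, hdψ s hs]
    have hne : deriv ψ t ≠ 0 := by
      rw [hdψ t ht]; exact ne_of_gt (hψ'pos t (Set.mem_Ici.mpr (le_of_lt ht)))
    have : DifferentiableAt ℝ (fun s => (deriv ψ s)⁻¹) t := (hdiffψ' t ht).inv hne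
    exact (this.congr_of_eventuallyEq heq).hasDerivAt
  have apos : ∀ t, z₀ ≤ t → 0 < a t := fun t ht => by
    rw [ha t]; exact one_div_pos.mpr (hψ'pos t ht)
  -- eventual smallness of deriv a
  have hsmall : ∀ ε > (0:ℝ), ∃ M, ∀ t, M ≤ t → |deriv a t| ≤ ε := by
    intro ε hε
    obtain ⟨M, hM⟩ := (Metric.tendsto_atTop.mp ha' ε hε)
    exact ⟨M, fun t ht => by
      have := hM t ht
      rw [Real.dist_eq, sub_zero] at this
      exact this.le⟩
  -- Part 1: pointwise convergence
  have limit : ∀ z : ℝ, 0 ≤ z →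
      Tendsto (fun R => ψ (R + a R * z) - ψ R) atTop (𝓝 (1 * z)) := by
    intro z hz0
    rcases eq_or_lt_of_le hz0 with rfl | hz
    · simpa using (tendsto_const_nhds : Tendsto (fun _ : ℝ => (0:ℝ)) atTop _)
    rw [Metric.tendsto_atTop]
    intro δ hδ
    set ε : ℝ := min ((2*z)⁻¹) (δ / (2*z^2 + 1)) with hεdef
    have hεpos : 0 < ε := lt_min (by positivity) (by positivity)
    have hε1 : ε * (2*z) ≤ 1 := by
      have := min_le_left ((2*z)⁻¹) (δ / (2*z^2 + 1))
      rw [← hεdef] at this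
      calc ε * (2*z) ≤ (2*z)⁻¹ * (2*z) := by nlinarith
        _ = 1 := by field_simp
    have hε2 : ε * (2*z^2 + 1) ≤ δ := by
      have h := min_le_right ((2*z)⁻¹) (δ / (2*z^2 + 1))
      rw [← hεdef] at h
      calc ε * (2*z^2+1) ≤ (δ / (2*z^2 + 1)) * (2*z^2+1) := by nlinarith
        _ = δ := by field_simp
    obtain ⟨M, hM⟩ := hsmall ε hεpos
    refine ⟨max (z₀ + 1) M, fun R hR => ?_⟩
    have hRz₀ : z₀ < R := by
      have := le_trans (le_max_left (z₀+1) M) hR; linarith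
    have hRM : ∀ t, R ≤ t → |deriv a t| ≤ ε := fun t ht =>
      hM t (le_trans (le_trans (le_max_right _ _) hR) ht)
    obtain ⟨hlo, hhi, -⟩ := von_mises_core ψ ψ' a z₀ hderiv hψ'pos ha hdiffa hRz₀ hz hεpos hRM
    have hεz : ε * z < 1 := by nlinarith
    have hhi' := hhi hεz
    set D := ψ (R + a R * z) - ψ R with hD
    have h1εz : (0:ℝ) < 1 + ε * z := by nlinarith
    have h2εz : (0:ℝ) < 1 - ε * z := by nlinarith
    have k1 : z ≤ D * (1 + ε*z) := (div_le_iff₀ h1εz).mp hlo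
    have k2 : D * (1 - ε*z) ≤ z := (le_div_iff₀ h2εz).mp hhi'
    have hD0 : 0 ≤ D := le_trans (by positivity) hlo
    have hD2 : D ≤ 2*z := by nlinarith
    rw [Real.dist_eq, one_mul, abs_sub_lt_iff]
    constructor
    · nlinarith
    · nlinarith
  -- Part 2: integrability of the limit
  have hint : Integrable (fun z => Real.exp (-(1:ℝ) * z)) (volume.restrict (Set.Ioi 0)) := by
    simpa [IntegrableOn] using exp_neg_integrableOn_Ioi 0 one_pos
  refine ⟨1, one_pos, limit, hint, ?_⟩
  -- Part 3: dominated convergence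
  set ε₀ : ℝ := ((d:ℝ) + 1)⁻¹ with hε₀def
  have hdpos : (0:ℝ) < (d:ℝ) + 1 := by positivity
  have hε₀pos : 0 < ε₀ := by positivity
  have hε₀le1 : ε₀ ≤ 1 := by
    rw [hε₀def]
    rw [inv_le_one_iff₀]
    right
    have h1d : (1:ℝ) ≤ (d:ℝ) := Nat.one_le_cast.mpr hd
    linarith
  obtain ⟨M₀, hM₀⟩ := hsmall ε₀ hε₀pos
  have hev : ∀ᶠ R in atTop, z₀ < R ∧ 1 ≤ R ∧ (∀ t, R ≤ t → |deriv a t| ≤ ε₀) ∧ a R ≤ R := by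
    have h1 : ∀ᶠ R in atTop, ‖a R‖ ≤ 1 * ‖R‖ := haLittle.def one_pos
    filter_upwards [eventually_ge_atTop (max (z₀ + 1) (max 1 M₀)), h1] with R hR hR1
    have hz₀R : z₀ + 1 ≤ R := le_trans (le_max_left _ _) hR
    have h1R : 1 ≤ R := le_trans (le_trans (le_max_left 1 M₀) (le_max_right _ _)) hR
    have hM₀R : M₀ ≤ R := le_trans (le_trans (le_max_right 1 M₀) (le_max_right _ _)) hR
    refine ⟨by linarith, h1R, fun t ht => hM₀ t (le_trans hM₀R ht), ?_⟩
    rw [one_mul, Real.norm_eq_abs, Real.norm_eq_abs] at hR1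
    calc a R ≤ |a R| := le_abs_self _
      _ ≤ |R| := hR1
      _ = R := abs_of_pos (by linarith)
  -- the dominating function
  set K : ℝ := ((d:ℝ) + 1)^(d+1) with hKdef
  have hbound_int : Integrable (fun z : ℝ => K * ((1+z)^2)⁻¹)
      (volume.restrict (Set.Ioi 0)) := by
    have base : IntegrableOn (fun z : ℝ => ((1+z)^2)⁻¹) (Set.Ioi 0) := by
      have hg : ∀ x ∈ Set.Ioi (0:ℝ), HasDerivAt (fun z : ℝ => -(1+z)⁻¹) (((1+x)^2)⁻¹) x := by
        intro x hx
        have hne : (1:ℝ) + x ≠ 0 := by simp at hx; positivity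
        have h1 : HasDerivAt (fun z : ℝ => 1 + z) 1 x := by
          simpa using (hasDerivAt_id x).const_add 1
        have := (h1.inv hne).neg
        convert this using 1
        all_goals first | rfl | field_simp
      refine integrableOn_Ioi_deriv_of_nonneg (l := 0) ?_ hg (fun x hx => by positivity) ?_
      · exact (((continuous_const.add continuous_id).continuousAt.inv₀
          (by norm_num)).neg).continuousWithinAt
      · have : Tendsto (fun z : ℝ => (1+z)⁻¹) atTop (𝓝 0) :=
          tendsto_inv_atTop_zero.comp (tendsto_atTop_add_const_left _ 1 tendsto_id)
        simpa using this.neg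
    exact base.const_mul K
  -- apply dominated convergence
  have hDCT := MeasureTheory.tendsto_integral_filter_of_dominated_convergence
    (μ := volume.restrict (Set.Ioi 0)) (l := atTop)
    (F := fun R z => (1 + a R * z / R) ^ (d - 1) * Real.exp (-(ψ (R + a R * z) - ψ R)))
    (f := fun z => Real.exp (-(1:ℝ) * z))
    (bound := fun z => K * ((1+z)^2)⁻¹)
    ?_ ?_ hbound_int ?_
  · convert hDCT using 2 <;> norm_num
  · -- measurability
    filter_upwards [hev] with R hR
    obtain ⟨hRz₀, hR1, -, -⟩ := hR
    have haR : 0 < a R := apos R hRz₀.le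
    have c1 : Continuous fun z : ℝ => (1 + a R * z / R) ^ (d-1) :=
      (continuous_const.add ((continuous_const.mul continuous_id).div_const R)).pow _
    have c2 : ContinuousOn (fun z : ℝ => Real.exp (-(ψ (R + a R * z) - ψ R))) (Set.Ioi 0) := by
      apply Real.continuous_exp.comp_continuousOn
      apply ContinuousOn.neg
      apply ContinuousOn.sub _ continuousOn_const
      apply (hC2.continuousOn).comp
      · exact (continuous_const.add (continuous_const.mul continuous_id)).continuousOn
      · intro z hz
        simp only [Set.mem_Ioi] at hz
        simp only [Set.mem_Ici]
        nlinarith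
    exact ((c1.continuousOn.mul c2).aestronglyMeasurable measurableSet_Ioi)
  · -- domination
    filter_upwards [hev] with R hR
    rw [ae_restrict_iff' measurableSet_Ioi]
    apply ae_of_all
    intro z hz
    simp only [Set.mem_Ioi] at hz
    obtain ⟨hRz₀, hR1, hRd, haRR⟩ := hR
    have haR : 0 < a R := apos R hRz₀.le
    have hRpos : (0:ℝ) < R := by linarith
    obtain ⟨-, -, hlog⟩ := von_mises_core ψ ψ' a z₀ hderiv hψ'pos ha hdiffa hRz₀ hz hε₀pos hRd
    set D := ψ (R + a R * z) - ψ R with hDdef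
    have h1z : (0:ℝ) < 1 + z := by linarith
    have h1εz : (0:ℝ) < 1 + ε₀ * z := by
      have := mul_pos hε₀pos hz; linarith
    have hfrac : 0 ≤ a R * z / R := by positivity
    have hfrac' : a R * z / R ≤ z := by
      rw [div_le_iff₀ hRpos]
      nlinarith
    have step1 : (1 + a R * z / R) ^ (d-1) ≤ (1+z)^(d-1) :=
      pow_le_pow_left₀ (by linarith) (by linarith) _
    have hexp : Real.exp (-D) ≤ ((1 + ε₀*z)^(d+1))⁻¹ := by
      have h1 : ((d:ℝ)+1) * Real.log (1 + ε₀*z) ≤ D := by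
        have : ε₀⁻¹ = (d:ℝ)+1 := by rw [hε₀def, inv_inv]
        rw [← this]; exact hlog
      calc Real.exp (-D) ≤ Real.exp (-(((d:ℝ)+1) * Real.log (1 + ε₀*z))) :=
            Real.exp_le_exp.mpr (by linarith)
        _ = ((1 + ε₀*z)^(d+1))⁻¹ := by
            rw [Real.exp_neg]
            congr 1
            rw [show ((d:ℝ)+1) = ((d+1 : ℕ) : ℝ) by push_cast; ring, Real.exp_nat_mul,
              Real.exp_log h1εz]
    have step3 : ((1 + ε₀*z)^(d+1))⁻¹ ≤ K * ((1+z)^(d+1))⁻¹ := by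
      have hb : ε₀ * (1+z) ≤ 1 + ε₀*z := by
        have : ε₀ * (1+z) = ε₀ + ε₀*z := by ring
        rw [this]; linarith
      have hbp : 0 < ε₀ * (1+z) := mul_pos hε₀pos h1z
      have hpow : (ε₀ * (1+z))^(d+1) ≤ (1 + ε₀*z)^(d+1) :=
        pow_le_pow_left₀ hbp.le hb _
      have hpowpos : 0 < (ε₀ * (1+z))^(d+1) := pow_pos hbp _
      calc ((1 + ε₀*z)^(d+1))⁻¹ ≤ ((ε₀ * (1+z))^(d+1))⁻¹ := by
            apply inv_anti₀ hpowpos hpow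
        _ = K * ((1+z)^(d+1))⁻¹ := by
            rw [mul_pow, mul_inv, hKdef, hε₀def]
            rw [← inv_pow, inv_inv]
    have habs : ‖(1 + a R * z / R) ^ (d - 1) * Real.exp (-D)‖
        = (1 + a R * z / R) ^ (d - 1) * Real.exp (-D) := by
      rw [Real.norm_eq_abs, abs_of_nonneg]
      exact mul_nonneg (pow_nonneg (by linarith) _) (Real.exp_pos _).le
    rw [habs]
    calc (1 + a R * z / R) ^ (d - 1) * Real.exp (-D)
        ≤ (1+z)^(d-1) * (K * ((1+z)^(d+1))⁻¹) := by
          apply mul_le_mul step1 (le_trans hexp step3) (Real.exp_pos _).le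
            (pow_nonneg (by linarith) _)
      _ = K * ((1+z)^2)⁻¹ := by
          rw [show d+1 = (d-1)+2 by omega, pow_add, mul_inv]
          have h0 : ((1:ℝ)+z)^(d-1) ≠ 0 := ne_of_gt (pow_pos h1z _)
          field_simp
  · -- a.e. pointwise convergence
    filter_upwards [ae_restrict_mem measurableSet_Ioi] with z hz
    simp only [Set.mem_Ioi] at hz
    have hq : Tendsto (fun R => a R / R) atTop (𝓝 0) := by
      refine (Asymptotics.isLittleO_iff_tendsto' ?_).mp haLittle
      filter_upwards [eventually_gt_atTop (0:ℝ)] with x hx h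
      exact absurd h (ne_of_gt hx)
    have t1 : Tendsto (fun R => (1 + a R * z / R)^(d-1)) atTop (𝓝 1) := by
      have h0 : Tendsto (fun R => a R * z / R) atTop (𝓝 0) := by
        have := hq.mul_const z
        simp only [zero_mul] at this
        apply this.congr
        intro R; rw [div_mul_eq_mul_div, mul_comm (a R) z, mul_comm z (a R)]
      have h1 : Tendsto (fun R => 1 + a R * z / R) atTop (𝓝 1) := by
        have := (tendsto_const_nhds (x := (1:ℝ)) (f := atTop)).add h0
        simpa using this
      have := h1.pow (d-1)
      simpa using this
    have t2 : Tendsto (fun R => Real.exp (-(ψ (R + a R * z) - ψ R))) atTop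
        (𝓝 (Real.exp (-(1:ℝ) * z))) := by
      have := (limit z hz.le).neg
      have h2 := (Real.continuous_exp.tendsto _).comp this
      simpa [Function.comp_def] using h2
    have := t1.mul t2
    simpa using this
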